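/- arXiv:2410.13593 — 2 statements merged into one kernel-verified Lean document; each statement's English description precedes it below -/
import Mathlib

section
/- Let n and k be natural numbers with k ≤ n and n - k even, and let f_1, ..., f_k be orthonormal vectors in n-dimensional Euclidean space. Then the function a ↦ 2^k · β_{n-k} · ∫_0^{⟨f_1,a⟩} ⋯ ∫_0^{⟨f_k,a⟩} (1 - t_1² - ⋯ - t_k²)^{(n-k)/2} dt_1 ⋯ dt_k is a polynomial function of a of total degree at most n. -/
open MeasureTheory Finset
open scoped RealInnerProductSpace

/-- The volume of the `m`-dimensional unit ball. -/
noncomputable def unitBallVol (m : ℕ) : ℝ :=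
  Real.pi ^ ((m : ℝ) / 2) / Real.Gamma ((m : ℝ) / 2 + 1)

open MvPolynomial in
/-- for `k ≤ n` with `n - k` even and `f_1, …, f_k` orthonormal in
`n`-dimensional Euclidean space, the function
`a ↦ 2^k · β_{n-k} · ∫_0^{⟨f_1,a⟩} ⋯ ∫_0^{⟨f_k,a⟩} (1 - t_1² - ⋯ - t_k²)^{(n-k)/2} dt`
is a polynomial function of `a` of total degree at most `n`. -/
theorem pizza_A1k_polynomial (n k : ℕ) (hkn : k ≤ n) (hpar : Even (n - k))
    (f : Fin k → EuclideanSpace ℝ (Fin n)) (hf : Orthonormal ℝ f) :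
    ∃ p : MvPolynomial (Fin n) ℝ, p.totalDegree ≤ n ∧
      ∀ a : EuclideanSpace ℝ (Fin n),
        2 ^ k * unitBallVol (n - k) *
          ((∏ i : Fin k, if ⟪f i, a⟫ < 0 then (-1 : ℝ) else 1) *
            ∫ t in Set.univ.pi fun i : Fin k => Set.uIoc 0 ⟪f i, a⟫,
              (1 - ∑ i, t i ^ 2) ^ (((n : ℝ) - (k : ℝ)) / 2)) =
        MvPolynomial.eval (fun i => a i) p := by
  classical
  obtain ⟨d, hd⟩ := hpar
  set q : MvPolynomial (Fin k) ℝ := (1 - ∑ i, X i ^ 2) ^ d with hq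
  set L : Fin k → MvPolynomial (Fin n) ℝ := fun i => ∑ j, C (f i j) * X j with hL
  have hLdeg : ∀ i, (L i).totalDegree ≤ 1 := by
    intro i
    refine (totalDegree_finset_sum _ _).trans (Finset.sup_le fun j _ => ?_)
    refine (totalDegree_mul _ _).trans ?_
    simp [totalDegree_X]
  refine ⟨MvPolynomial.C (2 ^ k * unitBallVol (n - k)) *
      ∑ α ∈ q.support, MvPolynomial.C (q.coeff α) *
        ∏ i, (MvPolynomial.C (((α i : ℝ) + 1)⁻¹) * L i ^ (α i + 1)), ?_, ?_⟩
  · -- degree bound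
    refine (totalDegree_mul _ _).trans ?_
    rw [totalDegree_C, zero_add]
    refine (totalDegree_finset_sum _ _).trans (Finset.sup_le fun α hα => ?_)
    refine (totalDegree_mul _ _).trans ?_
    rw [totalDegree_C, zero_add]
    refine (totalDegree_finset_prod _ _).trans ?_
    have h1 : ∀ i : Fin k,
        (MvPolynomial.C (((α i : ℝ) + 1)⁻¹) * L i ^ (α i + 1)).totalDegree ≤ α i + 1 := by
      intro i
      refine (totalDegree_mul _ _).trans ?_
      rw [totalDegree_C, zero_add]
      exact (totalDegree_pow _ _).trans
        (le_trans (Nat.mul_le_mul_left _ (hLdeg i)) (by omega))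
    refine (Finset.sum_le_sum fun i _ => h1 i).trans ?_
    rw [Finset.sum_add_distrib, Finset.sum_const, card_univ, Fintype.card_fin, smul_eq_mul,
      mul_one]
    have hα2 : ∑ i, α i ≤ q.totalDegree := by
      rw [← Finsupp.sum_fintype α (fun _ e => e) (fun _ => rfl)]
      exact le_totalDegree hα
    have hq2 : q.totalDegree ≤ d * 2 := by
      refine (totalDegree_pow _ _).trans ?_
      refine Nat.mul_le_mul_left d ?_
      refine (totalDegree_sub _ _).trans (max_le (by simp) ?_)
      refine (totalDegree_finset_sum _ _).trans (Finset.sup_le fun i _ => ?_)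
      exact (totalDegree_pow _ _).trans (by simp [totalDegree_X])
    omega
  · intro a
    set x : Fin k → ℝ := fun i => ⟪f i, a⟫ with hx
    set S : Set (Fin k → ℝ) := Set.univ.pi fun i => Set.uIoc 0 (x i) with hS
    -- rpow = pow d
    have hcast : (((n : ℝ) - (k : ℝ)) / 2) = (d : ℝ) := by
      have : (n : ℝ) - (k : ℝ) = ((n - k : ℕ) : ℝ) := by
        rw [Nat.cast_sub hkn]
      rw [this, hd]
      push_cast
      ring
    have hrpow : ∀ t : Fin k → ℝ,
        (1 - ∑ i, t i ^ 2) ^ (((n : ℝ) - (k : ℝ)) / 2)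
          = ∑ α ∈ q.support, q.coeff α * ∏ i, t i ^ α i := by
      intro t
      rw [hcast, Real.rpow_natCast]
      have : (1 - ∑ i, t i ^ 2) ^ d = MvPolynomial.eval t q := by
        simp [hq]
      rw [this, eval_eq']
    -- integrability of monomials
    have hSm : MeasurableSet S := MeasurableSet.univ_pi fun i => measurableSet_uIoc
    have hInt : ∀ α : Fin k →₀ ℕ,
        IntegrableOn (fun t : Fin k → ℝ => ∏ i, t i ^ α i) S := by
      intro α
      have hc : Continuous fun t : Fin k → ℝ => ∏ i, t i ^ α i := by fun_prop
      have hcomp : IsCompact (Set.univ.pi fun i => Set.uIcc 0 (x i)) :=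
        isCompact_univ_pi fun i => isCompact_uIcc
      exact (hc.continuousOn.integrableOn_compact hcomp).mono_set
        (Set.pi_mono fun i _ => Set.uIoc_subset_uIcc)
    -- the integral of each monomial factorizes
    have hfact : ∀ α : Fin k →₀ ℕ,
        (∫ t in S, ∏ i, t i ^ α i) = ∏ i, ∫ s in Set.uIoc 0 (x i), s ^ α i := by
      intro α
      rw [← integral_indicator hSm]
      have hpt : ∀ t : Fin k → ℝ,
          S.indicator (fun t : Fin k → ℝ => ∏ i, t i ^ α i) t
            = ∏ i, (Set.uIoc 0 (x i)).indicator (fun s => s ^ α i) (t i) := by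
        intro t
        by_cases ht : t ∈ S
        · rw [Set.indicator_of_mem ht]
          refine Finset.prod_congr rfl fun i _ => ?_
          rw [Set.indicator_of_mem (by exact ht i (Set.mem_univ i))]
        · rw [Set.indicator_of_notMem ht]
          have hex : ∃ i, t i ∉ Set.uIoc 0 (x i) := by
            by_contra hcon
            push_neg at hcon
            exact ht fun i _ => hcon i
          obtain ⟨i, hi⟩ := hex
          exact (Finset.prod_eq_zero (Finset.mem_univ i)
            (by rw [Set.indicator_of_notMem hi])).symm
      simp_rw [hpt]
      rw [MeasureTheory.integral_fintype_prod_volume_eq_prod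
        (f := fun i s => (Set.uIoc 0 (x i)).indicator (fun s => s ^ α i) s)]
      exact Finset.prod_congr rfl fun i _ => by
        rw [integral_indicator measurableSet_uIoc]
    -- sign * integral over uIoc = power formula
    have hsign : ∀ (i : Fin k) (m : ℕ),
        (if x i < 0 then (-1 : ℝ) else 1) * ∫ s in Set.uIoc 0 (x i), s ^ m
          = ((m : ℝ) + 1)⁻¹ * x i ^ (m + 1) := by
      intro i m
      have h1 : ∫ s in (0 : ℝ)..(x i), s ^ m
          = (if (0:ℝ) ≤ x i then 1 else -1 : ℝ) • ∫ s in Set.uIoc 0 (x i), s ^ m :=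
        intervalIntegral.intervalIntegral_eq_integral_uIoc _ 0 (x i) volume
      have h2 : ∫ s in (0 : ℝ)..(x i), s ^ m = (x i ^ (m + 1) - 0 ^ (m + 1)) / (m + 1) :=
        integral_pow m
      have hm : (m : ℝ) + 1 ≠ 0 := by positivity
      by_cases hxi : x i < 0
      · rw [if_pos hxi, if_neg (by linarith)] at *
        rw [neg_one_smul] at h1
        have h3 : (∫ s in Set.uIoc 0 (x i), s ^ m)
            = -((x i ^ (m + 1) - 0 ^ (m + 1)) / ((m : ℝ) + 1)) := by
          linarith [h1, h2]
        rw [h3]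
        field_simp
        simp
      · rw [if_neg hxi, if_pos (by linarith)] at *
        rw [one_smul] at h1
        rw [← h1, h2]
        field_simp
        simp
    -- evaluate the linear forms
    have hLx : ∀ i, MvPolynomial.eval (fun j => a j) (L i) = x i := by
      intro i
      simp [hL, hx, PiLp.inner_apply, RCLike.inner_apply, conj_trivial]
      exact Finset.sum_congr rfl fun j _ => mul_comm _ _
    have hint2 : (∫ t in S, (1 - ∑ i, t i ^ 2) ^ (((n : ℝ) - (k : ℝ)) / 2))
        = ∑ α ∈ q.support, q.coeff α * ∏ i, ∫ s in Set.uIoc 0 (x i), s ^ α i := by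
      simp_rw [hrpow]
      rw [integral_finset_sum _ (fun α _ => ((hInt α).const_mul _))]
      refine Finset.sum_congr rfl fun α _ => ?_
      rw [integral_const_mul, hfact α]
    have hterm : ∀ α ∈ q.support,
        (∏ i, (if x i < 0 then (-1 : ℝ) else 1)) *
            (q.coeff α * ∏ i, ∫ s in Set.uIoc 0 (x i), s ^ α i)
          = q.coeff α * ∏ i, (((α i : ℝ) + 1)⁻¹ * x i ^ (α i + 1)) := by
      intro α _
      have h4 : (∏ i, (((α i : ℝ) + 1)⁻¹ * x i ^ (α i + 1)))
          = ∏ i, ((if x i < 0 then (-1 : ℝ) else 1) * ∫ s in Set.uIoc 0 (x i), s ^ α i) :=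
        Finset.prod_congr rfl fun i _ => (hsign i (α i)).symm
      rw [h4, Finset.prod_mul_distrib]
      ring
    rw [hint2, Finset.mul_sum, Finset.sum_congr rfl hterm]
    simp only [map_mul, map_sum, map_prod, map_pow, MvPolynomial.eval_C, hLx]
end

section
/- Let W be a finite reflection group acting on a finite-dimensional real inner product space V with root system Φ and Jacobian J(a) = Π_{α∈Φ⁺} ⟨α,a⟩. If Z is a polynomial function on V that is skew-symmetric with respect to W, i.e. Z(w(a)) = (-1)^w Z(a) for all w ∈ W where (-1)^w is the sign (determinant) of w, then J divides Z in the polynomial ring. -/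
open Finset
open scoped RealInnerProductSpace

namespace JDS

open MvPolynomial Matrix

variable {n : ℕ}

noncomputable def Lf (α : EuclideanSpace ℝ (Fin n)) : MvPolynomial (Fin n) ℝ :=
  ∑ i, C (α i) * X i

lemma eval_Lf (α : EuclideanSpace ℝ (Fin n)) (x : Fin n → ℝ) :
    eval x (Lf α) = ∑ i, α i * x i := by
  simp [Lf]

lemma eval_aeval' (f : Fin n → MvPolynomial (Fin n) ℝ) (x : Fin n → ℝ)
    (p : MvPolynomial (Fin n) ℝ) :
    eval x (aeval f p) = eval (fun i => eval x (f i)) p := by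
  rw [aeval_def, MvPolynomial.algebraMap_eq, ← eval_assoc]
  rfl

lemma prime_X' (i0 : Fin n) : Prime (X i0 : MvPolynomial (Fin n) ℝ) := by
  let e := (renameEquiv ℝ (Equiv.optionSubtypeNe i0).symm).trans
    (optionEquivLeft ℝ {b : Fin n // b ≠ i0})
  rw [← MulEquiv.prime_iff e.toMulEquiv]
  have he : e (X i0) = Polynomial.X := by
    simp [e, Equiv.optionSubtypeNe_symm_self, optionEquivLeft_X_none]
  rw [show e.toMulEquiv (X i0) = e (X i0) from rfl, he]
  exact Polynomial.prime_X

lemma X_dvd_of_vanish (i0 : Fin n) (P : MvPolynomial (Fin n) ℝ)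
    (h : ∀ x : Fin n → ℝ, x i0 = 0 → eval x P = 0) : X i0 ∣ P := by
  set σf : Fin n → MvPolynomial (Fin n) ℝ := fun i => if i = i0 then 0 else X i with hσf
  have key : ∀ Q : MvPolynomial (Fin n) ℝ, X i0 ∣ Q - aeval σf Q := by
    intro Q
    induction Q using MvPolynomial.induction_on with
    | C a =>
        rw [aeval_C, MvPolynomial.algebraMap_eq, sub_self]
        exact dvd_zero _
    | add p q hp hq =>
        rw [map_add, show p + q - (aeval σf p + aeval σf q)
          = (p - aeval σf p) + (q - aeval σf q) by ring]
        exact dvd_add hp hq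
    | mul_X p i hp =>
        rcases eq_or_ne i i0 with rfl | hi
        · have hs : σf i = 0 := by simp [hσf]
          rw [_root_.map_mul, aeval_X, hs, mul_zero, sub_zero]
          exact Dvd.intro_left p rfl
        · have hs : σf i = X i := by simp [hσf, hi]
          rw [_root_.map_mul, aeval_X, hs,
            show p * X i - aeval σf p * X i = (p - aeval σf p) * X i by ring]
          exact hp.mul_right _
  have hz : aeval σf P = 0 := by
    apply MvPolynomial.funext
    intro x
    rw [eval_aeval', map_zero]
    apply h
    simp [hσf]
  have := key P
  rwa [hz, sub_zero] at this

lemma exists_onb (α : EuclideanSpace ℝ (Fin n)) (hα : ‖α‖ = 1) :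
    ∃ (i0 : Fin n) (b : OrthonormalBasis (Fin n) ℝ (EuclideanSpace ℝ (Fin n))), b i0 = α := by
  have hn : 0 < n := by
    rcases Nat.eq_zero_or_pos n with rfl | h
    · exfalso
      have h0 : α = 0 := Subsingleton.elim _ _
      rw [h0, norm_zero] at hα
      norm_num at hα
    · exact h
  set i0 : Fin n := ⟨0, hn⟩
  have hcard : Module.finrank ℝ (EuclideanSpace ℝ (Fin n)) = Fintype.card (Fin n) := by
    simp
  have horth : Orthonormal ℝ (({i0} : Set (Fin n)).restrict (fun _ => α)) := by
    constructor
    · intro i; exact hα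
    · intro i j hij
      exact absurd (Subsingleton.elim i j) hij
  obtain ⟨b, hb⟩ := horth.exists_orthonormalBasis_extension_of_card_eq hcard
  exact ⟨i0, b, hb i0 (Set.mem_singleton i0)⟩

lemma inner_eq_sum (u v : EuclideanSpace ℝ (Fin n)) : ⟪u, v⟫ = ∑ i, u i * v i := by
  simp [PiLp.inner_apply, RCLike.inner_apply, conj_trivial, mul_comm]

lemma key (α : EuclideanSpace ℝ (Fin n)) (hα : ‖α‖ = 1) :
    ∃ (i0 : Fin n) (e : MvPolynomial (Fin n) ℝ ≃ₐ[ℝ] MvPolynomial (Fin n) ℝ),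
      e (X i0) = Lf α ∧
      ∀ (Z : MvPolynomial (Fin n) ℝ) (x : Fin n → ℝ),
        ∃ u : EuclideanSpace ℝ (Fin n), ⟪α, u⟫ = x i0 ∧
          eval x (e.symm Z) = eval (fun i => u i) Z := by
  obtain ⟨i0, b, hb⟩ := exists_onb α hα
  have hbo : ∀ i j, ⟪b i, b j⟫ = if i = j then (1:ℝ) else 0 :=
    fun i j => orthonormal_iff_ite.mp b.orthonormal i j
  -- matrix of the basis
  set M : Matrix (Fin n) (Fin n) ℝ := Matrix.of (fun i j => b i j) with hMdef
  have hM : M * Mᵀ = 1 := by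
    ext i k
    have := hbo i k
    rw [inner_eq_sum] at this
    simp [Matrix.mul_apply, Matrix.one_apply, hMdef, this]
  have hM' : Mᵀ * M = 1 := mul_eq_one_comm.mp hM
  have hent : ∀ i k, (∑ j, b i j * b k j) = if i = k then (1:ℝ) else 0 := by
    intro i k
    rw [← inner_eq_sum, hbo]
  have hent' : ∀ i k, (∑ j, b j i * b j k) = if i = k then (1:ℝ) else 0 := by
    intro i k
    have := congrFun (congrFun hM' i) k
    simpa [Matrix.mul_apply, Matrix.one_apply, hMdef] using this
  have hs2 : ∀ (x : Fin n → ℝ) (i : Fin n), ∑ j, b i j * (∑ k, b k j * x k) = x i := by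
    intro x i
    simp_rw [Finset.mul_sum]
    rw [Finset.sum_comm]
    simp_rw [← mul_assoc, ← Finset.sum_mul, hent]
    simp
  have hs1 : ∀ (x : Fin n → ℝ) (i : Fin n), ∑ j, b j i * (∑ k, b j k * x k) = x i := by
    intro x i
    simp_rw [Finset.mul_sum]
    rw [Finset.sum_comm]
    have : ∀ k, ∑ j, b j i * (b j k * x k) = (if i = k then (1:ℝ) else 0) * x k := by
      intro k
      simp_rw [← mul_assoc, ← Finset.sum_mul, hent']
    simp_rw [this]
    simp
  set f : Fin n → MvPolynomial (Fin n) ℝ := fun i => ∑ j, C (b j i) * X j with hf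
  set g : Fin n → MvPolynomial (Fin n) ℝ := fun i => ∑ j, C (b i j) * X j with hg
  have hcomp1 : ∀ (P : MvPolynomial (Fin n) ℝ) (x : Fin n → ℝ),
      eval x (aeval g (aeval f P)) = eval x P := by
    intro P x
    rw [eval_aeval', eval_aeval']
    have hx : (fun i => eval (fun i' => eval x (g i')) (f i)) = x := by
      funext i
      simp only [hf, hg, map_sum, _root_.map_mul, eval_C, eval_X]
      exact hs1 x i
    rw [hx]
  have hcomp2 : ∀ (P : MvPolynomial (Fin n) ℝ) (x : Fin n → ℝ),
      eval x (aeval f (aeval g P)) = eval x P := by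
    intro P x
    rw [eval_aeval', eval_aeval']
    have hx : (fun i => eval (fun i' => eval x (f i')) (g i)) = x := by
      funext i
      simp only [hf, hg, map_sum, _root_.map_mul, eval_C, eval_X]
      exact hs2 x i
    rw [hx]
  have h1 : (aeval g).comp (aeval f) = AlgHom.id ℝ (MvPolynomial (Fin n) ℝ) := by
    apply AlgHom.ext
    intro P
    exact MvPolynomial.funext fun x => by
      simpa using hcomp1 P x
  have h2 : (aeval f).comp (aeval g) = AlgHom.id ℝ (MvPolynomial (Fin n) ℝ) := by
    apply AlgHom.ext
    intro P
    exact MvPolynomial.funext fun x => by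
      simpa using hcomp2 P x
  refine ⟨i0, AlgEquiv.ofAlgHom (aeval g) (aeval f) h1 h2, ?_, ?_⟩
  · show aeval g (X i0) = Lf α
    rw [aeval_X, hg]
    simp only [Lf, hb.symm]
  · intro Z x
    refine ⟨(WithLp.toLp 2 (fun i => ∑ j, b j i * x j : Fin n → ℝ) : EuclideanSpace ℝ (Fin n)), ?_, ?_⟩
    · rw [inner_eq_sum]
      calc ∑ i, α i * ∑ j, b j i * x j
          = ∑ i, b i0 i * ∑ j, b j i * x j := by rw [hb]
        _ = x i0 := hs2 x i0
    · show eval x (aeval f Z) = _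
      rw [eval_aeval']
      have hx : (fun i => eval x (f i)) = (fun i => ∑ j, b j i * x j) := by
        funext i
        simp only [hf, map_sum, _root_.map_mul, eval_C, eval_X]
      rw [hx]

lemma prime_Lf (α : EuclideanSpace ℝ (Fin n)) (hα : ‖α‖ = 1) : Prime (Lf α) := by
  obtain ⟨i0, e, he, -⟩ := key α hα
  rw [← he]
  exact (MulEquiv.prime_iff e.toMulEquiv).mpr (prime_X' i0)

lemma Lf_dvd_of_vanish (α : EuclideanSpace ℝ (Fin n)) (hα : ‖α‖ = 1)
    (Z : MvPolynomial (Fin n) ℝ)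
    (hv : ∀ x : EuclideanSpace ℝ (Fin n), ⟪α, x⟫ = 0 → eval (fun i => x i) Z = 0) :
    Lf α ∣ Z := by
  obtain ⟨i0, e, he, hev⟩ := key α hα
  have hd : X i0 ∣ e.symm Z := by
    apply X_dvd_of_vanish
    intro x hx
    obtain ⟨u, hu1, hu2⟩ := hev Z x
    rw [hu2]
    exact hv u (by rw [hu1, hx])
  have := map_dvd e hd
  rwa [he, AlgEquiv.apply_symm_apply] at this

lemma Lf_not_dvd (α β : EuclideanSpace ℝ (Fin n)) (hα : ‖α‖ = 1) (hβ : ‖β‖ = 1)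
    (hne : α ≠ β) (hne' : α ≠ -β) : ¬ (Lf β ∣ Lf α) := by
  rintro ⟨Q, hQ⟩
  have hzero : ∀ x : EuclideanSpace ℝ (Fin n), ⟪β, x⟫ = 0 → ⟪α, x⟫ = 0 := by
    intro x hx
    have h1 : eval (fun i => x i) (Lf α) = eval (fun i => x i) (Lf β) * eval (fun i => x i) Q := by
      rw [hQ, _root_.map_mul]
    rw [eval_Lf, eval_Lf] at h1
    rw [inner_eq_sum] at hx ⊢
    rw [h1, hx, zero_mul]
  set c : ℝ := ⟪β, α⟫ with hc
  set v : EuclideanSpace ℝ (Fin n) := α - c • β with hv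
  have hβv : ⟪β, v⟫ = 0 := by
    rw [hv, inner_sub_right, real_inner_smul_right, ← hc, real_inner_self_eq_norm_sq, hβ]
    ring
  have hαv : ⟪α, v⟫ = 0 := hzero v hβv
  have hvv : ⟪v, v⟫ = 0 := by
    have h2 : ⟪v, v⟫ = ⟪α, v⟫ - c * ⟪β, v⟫ := by
      nth_rewrite 1 [hv]
      rw [inner_sub_left, real_inner_smul_left]
    rw [h2, hαv, hβv, mul_zero, sub_zero]
  have hv0 : v = 0 := inner_self_eq_zero.mp hvv
  have hαc : α = c • β := by
    rw [hv, sub_eq_zero] at hv0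
    exact hv0
  have habs : |c| = 1 := by
    have h3 : ‖α‖ = ‖c • β‖ := by rw [hαc]
    rw [hα, norm_smul, hβ, Real.norm_eq_abs, mul_one] at h3
    exact h3.symm
  rcases abs_eq (by norm_num : (0:ℝ) ≤ 1) |>.mp habs with h4 | h4
  · rw [h4, one_smul] at hαc
    exact hne hαc
  · rw [h4, neg_one_smul] at hαc
    exact hne' hαc

lemma refl_apply (α : EuclideanSpace ℝ (Fin n)) (hα : ‖α‖ = 1)
    (x : EuclideanSpace ℝ (Fin n)) :
    (Submodule.reflection (ℝ ∙ α)ᗮ) x = x - (2 * ⟪α, x⟫) • α := by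
  rw [Submodule.reflection_orthogonal_apply, Submodule.reflection_apply,
    Submodule.starProjection_unit_singleton ℝ hα, two_smul, two_mul, add_smul]
  abel

lemma det_refl (α : EuclideanSpace ℝ (Fin n)) (hα : ‖α‖ = 1) :
    LinearMap.det (Submodule.reflection (ℝ ∙ α)ᗮ :
      EuclideanSpace ℝ (Fin n) ≃ₗᵢ[ℝ] EuclideanSpace ℝ (Fin n)).toLinearEquiv.toLinearMap
      = -1 := by
  obtain ⟨i0, b, hb⟩ := exists_onb α hα
  rw [← LinearMap.det_toMatrix b.toBasis]
  have happ : ∀ j, (Submodule.reflection (ℝ ∙ α)ᗮ :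
      EuclideanSpace ℝ (Fin n) ≃ₗᵢ[ℝ] EuclideanSpace ℝ (Fin n)).toLinearEquiv.toLinearMap
        (b.toBasis j) = if j = i0 then -(b.toBasis i0) else b.toBasis j := by
    intro j
    have h0 : (Submodule.reflection (ℝ ∙ α)ᗮ :
        EuclideanSpace ℝ (Fin n) ≃ₗᵢ[ℝ] EuclideanSpace ℝ (Fin n)).toLinearEquiv.toLinearMap
          (b.toBasis j) = (Submodule.reflection (ℝ ∙ α)ᗮ) (b j) := by
      simp [OrthonormalBasis.coe_toBasis]
    rw [h0, refl_apply α hα]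
    rcases eq_or_ne j i0 with rfl | hj
    · rw [if_pos rfl]
      have h1 : ⟪α, b j⟫ = 1 := by
        rw [← hb, real_inner_self_eq_norm_sq, hb, hα]; norm_num
      rw [h1, OrthonormalBasis.coe_toBasis, ← hb]
      rw [mul_one, two_smul]
      abel
    · rw [if_neg hj]
      have h1 : ⟪α, b j⟫ = 0 := by
        rw [← hb]
        exact b.orthonormal.2 (Ne.symm hj)
      rw [h1, mul_zero, zero_smul, sub_zero, OrthonormalBasis.coe_toBasis]
  have hmat : LinearMap.toMatrix b.toBasis b.toBasis (Submodule.reflection (ℝ ∙ α)ᗮ :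
      EuclideanSpace ℝ (Fin n) ≃ₗᵢ[ℝ] EuclideanSpace ℝ (Fin n)).toLinearEquiv.toLinearMap
      = Matrix.diagonal (fun i => if i = i0 then (-1:ℝ) else 1) := by
    ext i j
    rw [LinearMap.toMatrix_apply, happ j]
    rcases eq_or_ne j i0 with rfl | hj
    · rw [if_pos rfl, map_neg, Module.Basis.repr_self]
      by_cases hij : i = j
      · subst hij
        simp [Matrix.diagonal_apply, Finsupp.single_apply]
      · simp [Matrix.diagonal_apply, Finsupp.single_apply, hij, Ne.symm hij]
    · rw [if_neg hj, Module.Basis.repr_self]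
      by_cases hij : i = j
      · subst hij
        simp [Matrix.diagonal_apply, Finsupp.single_apply, hj]
      · simp [Matrix.diagonal_apply, Finsupp.single_apply, hij, Ne.symm hij]
  rw [hmat, Matrix.det_diagonal]
  rw [Finset.prod_ite_eq' Finset.univ i0 (fun _ => (-1:ℝ))]
  simp

lemma prod_dvd {R : Type*} [CommMonoidWithZero R] {ι : Type*} [DecidableEq ι]
    (s : Finset ι) (F : ι → R) (Z : R)
    (hp : ∀ i ∈ s, Prime (F i)) (hnd : ∀ i ∈ s, ∀ j ∈ s, i ≠ j → ¬ F i ∣ F j)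
    (hd : ∀ i ∈ s, F i ∣ Z) :
    (∏ i ∈ s, F i) ∣ Z := by
  induction s using Finset.induction_on generalizing Z with
  | empty => simp
  | @insert a t ha ih =>
    obtain ⟨Y, rfl⟩ := hd a (mem_insert_self a t)
    rw [Finset.prod_insert ha]
    apply mul_dvd_mul_left
    apply ih Y (fun i hi => hp i (mem_insert_of_mem hi))
      (fun i hi j hj hij => hnd i (mem_insert_of_mem hi) j (mem_insert_of_mem hj) hij)
    intro i hi
    have h1 := hd i (mem_insert_of_mem hi)
    have hia : i ≠ a := fun h => ha (h ▸ hi)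
    exact ((hp i (mem_insert_of_mem hi)).dvd_or_dvd h1).resolve_left
      (hnd i (mem_insert_of_mem hi) a (mem_insert_self a t) hia)

end JDS

/-- let `W` be a finite reflection group on `ℝ^n`, generated by the
reflections in the pseudo-roots of a pseudo-root system `Φ`, with a choice of positive
roots `Φ⁺` (containing exactly one of `±α` for each `α ∈ Φ`).  If `Z` is a polynomial
that is skew-symmetric with respect to `W`, i.e. `Z(w(a)) = (-1)^w Z(a)` with `(-1)^w`
the determinant of `w`, then the Jacobian `J = ∏_{α∈Φ⁺} ⟨α,·⟩` divides `Z`. -/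
theorem jacobian_dvd_skew_symmetric (n : ℕ)
    (Φ : Finset (EuclideanSpace ℝ (Fin n)))
    (hunit : ∀ α ∈ Φ, ‖α‖ = 1)
    (hrefl : ∀ α ∈ Φ, ∀ β ∈ Φ, α - (2 * ⟪β, α⟫) • β ∈ Φ)
    (Φp : Finset (EuclideanSpace ℝ (Fin n))) (hsub : Φp ⊆ Φ)
    (hpos : ∀ α ∈ Φ, (α ∈ Φp ↔ ¬(-α ∈ Φp)))
    (hfin : (Subgroup.closure
      {w : EuclideanSpace ℝ (Fin n) ≃ₗᵢ[ℝ] EuclideanSpace ℝ (Fin n) |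
        ∃ α ∈ Φ, ∀ x, w x = x - (2 * ⟪α, x⟫) • α} :
          Subgroup _) |>.carrier.Finite)
    (Z : MvPolynomial (Fin n) ℝ)
    (hskew : ∀ w ∈ Subgroup.closure
      {w : EuclideanSpace ℝ (Fin n) ≃ₗᵢ[ℝ] EuclideanSpace ℝ (Fin n) |
        ∃ α ∈ Φ, ∀ x, w x = x - (2 * ⟪α, x⟫) • α},
      ∀ a : EuclideanSpace ℝ (Fin n),
        MvPolynomial.eval (fun i => w a i) Z =
          LinearMap.det w.toLinearEquiv.toLinearMap *
            MvPolynomial.eval (fun i => a i) Z) :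
    (∏ α ∈ Φp, ∑ i, MvPolynomial.C (α i) * MvPolynomial.X i) ∣ Z := by
  classical
  show (∏ α ∈ Φp, JDS.Lf α) ∣ Z
  apply JDS.prod_dvd
  · intro α hαp
    exact JDS.prime_Lf α (hunit α (hsub hαp))
  · intro α hαp β hβp hne
    apply JDS.Lf_not_dvd β α (hunit β (hsub hβp)) (hunit α (hsub hαp)) (Ne.symm hne)
    intro hβα
    have h1 : ¬ (-α ∈ Φp) := (hpos α (hsub hαp)).mp hαp
    exact h1 (hβα ▸ hβp)
  · intro α hαp
    have hα : ‖α‖ = 1 := hunit α (hsub hαp)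
    apply JDS.Lf_dvd_of_vanish α hα Z
    intro x hx
    set w : EuclideanSpace ℝ (Fin n) ≃ₗᵢ[ℝ] EuclideanSpace ℝ (Fin n) :=
      Submodule.reflection (ℝ ∙ α)ᗮ with hwdef
    have hw : ∀ y, w y = y - (2 * ⟪α, y⟫) • α := fun y => JDS.refl_apply α hα y
    have hmem : w ∈ Subgroup.closure
        {w : EuclideanSpace ℝ (Fin n) ≃ₗᵢ[ℝ] EuclideanSpace ℝ (Fin n) |
          ∃ α ∈ Φ, ∀ x, w x = x - (2 * ⟪α, x⟫) • α} :=
      Subgroup.subset_closure ⟨α, hsub hαp, hw⟩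
    have h5 := hskew w hmem x
    have hdet : LinearMap.det w.toLinearEquiv.toLinearMap = -1 := JDS.det_refl α hα
    have h6 : w x = x := by rw [hw, hx, mul_zero, zero_smul, sub_zero]
    rw [hdet, h6] at h5
    linarith
end
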